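/- arXiv:2111.01559 — 12 statements merged into one kernel-verified Lean document; each statement's English description precedes it below -/
import Mathlib

section
/- If the residue characteristic is not 2, then trace ρ(g) ≡ χ₁(g) + χ₂(g) (mod π^n) for all g ∈ G if and only if det(t − ρ(g)) ≡ (t − χ₁(g))(t − χ₂(g)) (mod π^n) for all g ∈ G. (Equivalently: given trace ρ(g) ≡ χ₁(g)+χ₂(g) mod π^n for all g, it follows that det ρ(g) ≡ χ₁(g)χ₂(g) mod π^n for all g.) -/
open Matrix

lemma trace_sq_sub_trace_sq {O : Type*} [CommRing O] (M : Matrix (Fin 2) (Fin 2) O) :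
    Matrix.trace M ^ 2 - Matrix.trace (M * M) = 2 * Matrix.det M := by
  simp [Matrix.trace_fin_two, Matrix.det_fin_two, Matrix.mul_apply, Fin.sum_univ_two]
  ring

/-- If the residue characteristic is not 2 (i.e. `2` is a unit of the DVR `O`),
then the trace of `ρ` is congruent to `χ₁ + χ₂` mod `π^n` if and only if the
characteristic polynomial of `ρ(g)` factors as `(t - χ₁(g))(t - χ₂(g))` mod `π^n`
(i.e. both the trace and determinant congruences hold). -/
theorem trace_reducible_iff_charpoly_reducible
    {O : Type*} [CommRing O] [IsDomain O] [IsDiscreteValuationRing O]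
    (π : O) (hπ : Irreducible π) (h2 : IsUnit (2 : O))
    {G : Type*} [Group G] (n : ℕ)
    (ρ : G →* GL (Fin 2) O)
    (χ₁ χ₂ : G →* (O ⧸ Ideal.span {π ^ n})ˣ) :
    (∀ g : G, Ideal.Quotient.mk (Ideal.span {π ^ n})
        (Matrix.trace (ρ g : Matrix (Fin 2) (Fin 2) O)) = (χ₁ g : O ⧸ Ideal.span {π ^ n}) + χ₂ g)
    ↔
    (∀ g : G, Ideal.Quotient.mk (Ideal.span {π ^ n})
        (Matrix.trace (ρ g : Matrix (Fin 2) (Fin 2) O)) = (χ₁ g : O ⧸ Ideal.span {π ^ n}) + χ₂ g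
      ∧ Ideal.Quotient.mk (Ideal.span {π ^ n})
        (Matrix.det (ρ g : Matrix (Fin 2) (Fin 2) O)) = (χ₁ g : O ⧸ Ideal.span {π ^ n}) * χ₂ g) := by
  set I := Ideal.span {π ^ n}
  set f := Ideal.Quotient.mk I
  constructor
  · intro h g
    refine ⟨h g, ?_⟩
    have h2' : IsUnit ((2 : O ⧸ I)) := by
      have := h2.map f
      simpa [map_ofNat] using this
    apply h2'.mul_left_cancel
    have hsq : ((ρ (g * g) : Matrix (Fin 2) (Fin 2) O))
        = (ρ g : Matrix (Fin 2) (Fin 2) O) * (ρ g : Matrix (Fin 2) (Fin 2) O) := by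
      rw [_root_.map_mul]; rfl
    have key := trace_sq_sub_trace_sq ((ρ g : Matrix (Fin 2) (Fin 2) O))
    have : f (Matrix.trace ((ρ g : Matrix (Fin 2) (Fin 2) O))) ^ 2
        - f (Matrix.trace ((ρ (g * g) : Matrix (Fin 2) (Fin 2) O)))
        = 2 * f (Matrix.det ((ρ g : Matrix (Fin 2) (Fin 2) O))) := by
      rw [hsq, ← map_pow, ← map_sub, key, _root_.map_mul, map_ofNat]
    rw [h g, h (g * g)] at this
    rw [← this]
    push_cast [_root_.map_mul, Units.val_mul]
    ring
  · intro h g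
    exact (h g).1
end

section
/- Let ρ : G → GL₂(O) be a representation and (χ₁, χ₂) a pair of conjugate characters modulo π^n, i.e. trace ρ(g) ≡ χ₁(g)+χ₂(g) and det ρ(g) ≡ χ₁(g)χ₂(g) mod π^n for all g. Then for any g, h ∈ G and a, b ∈ O, the matrix f = a·ρ(g) + b·ρ(h) satisfies trace(f) ≡ (a χ₁(g)+b χ₁(h)) + (a χ₂(g)+b χ₂(h)) and det(f) ≡ (a χ₁(g)+b χ₁(h))·(a χ₂(g)+b χ₂(h)) modulo π^n. -/
open Matrix

lemma det_smul_add_smul_fin_two {O : Type*} [CommRing O] (A B : Matrix (Fin 2) (Fin 2) O)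
    (a b : O) :
    Matrix.det (a • A + b • B) =
      a ^ 2 * Matrix.det A + b ^ 2 * Matrix.det B +
        a * b * (Matrix.trace A * Matrix.trace B - Matrix.trace (A * B)) := by
  simp only [Matrix.det_fin_two, Matrix.trace_fin_two, Matrix.add_apply, Matrix.smul_apply,
    Matrix.mul_apply, Fin.sum_univ_two, smul_eq_mul]
  ring

/-- If `(χ₁, χ₂)` is a pair of conjugate characters of `ρ` modulo `π^n`, then for any
`g, h ∈ G` and `a, b ∈ O`, the element `f = a·ρ(g) + b·ρ(h)` of the `O`-span of `ρ(G)`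
satisfies the analogous trace and determinant congruences modulo `π^n`. -/
theorem charpoly_factorisation_of_linear_combination
    {O : Type*} [CommRing O] [IsDomain O] [IsDiscreteValuationRing O]
    (π : O) (hπ : Irreducible π)
    {G : Type*} [Group G] (n : ℕ)
    (ρ : G →* GL (Fin 2) O)
    (χ₁ χ₂ : G →* (O ⧸ Ideal.span {π ^ n})ˣ)
    (hconj : ∀ g : G,
      Ideal.Quotient.mk (Ideal.span {π ^ n})
        (Matrix.trace (ρ g : Matrix (Fin 2) (Fin 2) O)) = (χ₁ g : O ⧸ Ideal.span {π ^ n}) + χ₂ g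
      ∧ Ideal.Quotient.mk (Ideal.span {π ^ n})
        (Matrix.det (ρ g : Matrix (Fin 2) (Fin 2) O)) = (χ₁ g : O ⧸ Ideal.span {π ^ n}) * χ₂ g)
    (g h : G) (a b : O) :
    Ideal.Quotient.mk (Ideal.span {π ^ n})
        (Matrix.trace (a • (ρ g : Matrix (Fin 2) (Fin 2) O) + b • (ρ h : Matrix (Fin 2) (Fin 2) O)))
      = (Ideal.Quotient.mk (Ideal.span {π ^ n}) a * χ₁ g
          + Ideal.Quotient.mk (Ideal.span {π ^ n}) b * χ₁ h)
        + (Ideal.Quotient.mk (Ideal.span {π ^ n}) a * χ₂ g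
          + Ideal.Quotient.mk (Ideal.span {π ^ n}) b * χ₂ h)
    ∧ Ideal.Quotient.mk (Ideal.span {π ^ n})
        (Matrix.det (a • (ρ g : Matrix (Fin 2) (Fin 2) O) + b • (ρ h : Matrix (Fin 2) (Fin 2) O)))
      = (Ideal.Quotient.mk (Ideal.span {π ^ n}) a * χ₁ g
          + Ideal.Quotient.mk (Ideal.span {π ^ n}) b * χ₁ h)
        * (Ideal.Quotient.mk (Ideal.span {π ^ n}) a * χ₂ g
          + Ideal.Quotient.mk (Ideal.span {π ^ n}) b * χ₂ h) := by
  set φ := Ideal.Quotient.mk (Ideal.span {π ^ n})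
  have hgh : ((ρ g : Matrix (Fin 2) (Fin 2) O) * (ρ h : Matrix (Fin 2) (Fin 2) O)) =
      (ρ (g * h) : Matrix (Fin 2) (Fin 2) O) := by
    rw [_root_.map_mul]; rfl
  have htg := (hconj g).1
  have hth := (hconj h).1
  have hdg := (hconj g).2
  have hdh := (hconj h).2
  have htgh := (hconj (g * h)).1
  constructor
  · rw [Matrix.trace_add, Matrix.trace_smul, Matrix.trace_smul]
    simp only [smul_eq_mul, map_add, _root_.map_mul, htg, hth]
    ring
  · rw [det_smul_add_smul_fin_two]
    simp only [map_add, _root_.map_mul, map_sub, map_pow, hdg, hdh, htg, hth]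
    rw [hgh, htgh]
    simp only [_root_.map_mul, Units.val_mul]
    ring
end

section
/- Let (χ₁, χ₂) and (η₁, η₂) be two pairs of conjugate characters of ρ modulo π^n. Suppose m(χ₁,χ₂) ≥ n/2, where m(χ₁,χ₂) is the largest integer m with χ₁ ≡ χ₂ mod π^m. Then χ₁ ≡ χ₂ ≡ η₁ ≡ η₂ modulo π^⌈n/2⌉. -/
open Matrix

/-- `(χ₁, χ₂)` is a pair of conjugate characters of `ρ` modulo `π^n`:
the characteristic polynomial of `ρ(g)` factors as `(t-χ₁(g))(t-χ₂(g))` mod `π^n`. -/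
def IsConjPair {O : Type*} [CommRing O] {G : Type*} [Group G] (π : O) (n : ℕ)
    (ρ : G →* GL (Fin 2) O) (χ₁ χ₂ : G →* (O ⧸ Ideal.span {π ^ n})ˣ) : Prop :=
  ∀ g : G,
    Ideal.Quotient.mk (Ideal.span {π ^ n})
      (Matrix.trace (ρ g : Matrix (Fin 2) (Fin 2) O)) = (χ₁ g : O ⧸ Ideal.span {π ^ n}) + χ₂ g
    ∧ Ideal.Quotient.mk (Ideal.span {π ^ n})
      (Matrix.det (ρ g : Matrix (Fin 2) (Fin 2) O)) = (χ₁ g : O ⧸ Ideal.span {π ^ n}) * χ₂ g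

/-- Divisibility by `π^k` in `O ⧸ (π^n)` lifts to `O` when `k ≤ n`. -/
lemma quot_pow_dvd_iff {O : Type*} [CommRing O] (π : O) {n k : ℕ} (hk : k ≤ n) (x : O) :
    (Ideal.Quotient.mk (Ideal.span {π ^ n}) π) ^ k ∣ Ideal.Quotient.mk (Ideal.span {π ^ n}) x
      ↔ π ^ k ∣ x := by
  constructor
  · rintro ⟨y, hy⟩
    obtain ⟨y, rfl⟩ := Ideal.Quotient.mk_surjective y
    rw [← map_pow, ← _root_.map_mul, Ideal.Quotient.eq, Ideal.mem_span_singleton] at hy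
    obtain ⟨c, hc⟩ := hy
    refine ⟨y + π ^ (n - k) * c, ?_⟩
    linear_combination hc - c * (pow_sub_mul_pow π hk)
  · rintro ⟨c, rfl⟩
    exact ⟨Ideal.Quotient.mk _ c, by rw [← map_pow, ← _root_.map_mul]⟩

/-- Key DVR-style lemma: if `p^n ∣ a*b` and `p^k ∣ a+b` with `2k ≤ n+1`, then
`p^k` divides both `a` and `b`. -/
lemma key_dvd {O : Type*} [CommRing O] [IsDomain O] {p : O} (hp : Prime p)
    {k n : ℕ} (hk : 2 * k ≤ n + 1) {a b : O}
    (hab : p ^ n ∣ a * b) (hs : p ^ k ∣ a + b) : p ^ k ∣ a ∧ p ^ k ∣ b := by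
  classical
  suffices h : p ^ k ∣ a ∨ p ^ k ∣ b by
    rcases h with h | h
    · exact ⟨h, by have := dvd_sub hs h; simpa using this⟩
    · refine ⟨?_, h⟩
      have := dvd_sub hs h; simpa using this
  have hkn : k ≤ n := by omega
  set i := Nat.findGreatest (fun j => p ^ j ∣ a) k with hi
  have hik : i ≤ k := Nat.findGreatest_le k
  have hia : p ^ i ∣ a :=
    Nat.findGreatest_spec (P := fun j => p ^ j ∣ a) (Nat.zero_le k) (by simp)
  rcases eq_or_lt_of_le hik with heq | hlt
  · left; rw [← heq]; exact hia
  · have hnot : ¬ p ^ (i + 1) ∣ a :=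
      Nat.findGreatest_is_greatest (lt_of_eq_of_lt hi.symm (Nat.lt_succ_self i)) hlt
    clear_value i
    clear hi
    obtain ⟨a', rfl⟩ := hia
    have hpa' : ¬ p ∣ a' := by
      rintro ⟨c, rfl⟩
      exact hnot ⟨c, by ring⟩
    have hin : i ≤ n := le_trans hik hkn
    have hcancel : p ^ (n - i) ∣ a' * b := by
      have h1 : p ^ i * p ^ (n - i) ∣ p ^ i * (a' * b) := by
        rw [← pow_add, Nat.add_sub_cancel' hin]
        calc p ^ n ∣ p ^ i * a' * b := hab
          _ = p ^ i * (a' * b) := by ring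
      exact (mul_dvd_mul_iff_left (pow_ne_zero i hp.ne_zero)).mp h1
    have hb : p ^ (n - i) ∣ b := hp.pow_dvd_of_dvd_mul_left _ hpa' hcancel
    right
    exact dvd_trans (pow_dvd_pow p (by omega)) hb

/-- If `(χ₁,χ₂)` and `(η₁,η₂)` are two pairs of conjugate characters modulo `π^n` and
`χ₁ ≡ χ₂ (mod π^m)` with `m ≥ n/2`, then all four characters are congruent
modulo `π^⌈n/2⌉`. -/
theorem conj_pairs_congruent_of_large_m
    {O : Type*} [CommRing O] [IsDomain O] [IsDiscreteValuationRing O]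
    (π : O) (hπ : Irreducible π) (h2 : IsUnit (2 : O))
    {G : Type*} [Group G] (n : ℕ)
    (ρ : G →* GL (Fin 2) O)
    (χ₁ χ₂ η₁ η₂ : G →* (O ⧸ Ideal.span {π ^ n})ˣ)
    (hχ : IsConjPair π n ρ χ₁ χ₂) (hη : IsConjPair π n ρ η₁ η₂)
    (m : ℕ) (hm2 : n ≤ 2 * m)
    (hm : ∀ g : G, (Ideal.Quotient.mk (Ideal.span {π ^ n}) π) ^ m ∣
        ((χ₁ g : O ⧸ Ideal.span {π ^ n}) - χ₂ g)) :
    ∀ g : G,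
      (Ideal.Quotient.mk (Ideal.span {π ^ n}) π) ^ ((n + 1) / 2) ∣
        ((χ₁ g : O ⧸ Ideal.span {π ^ n}) - χ₂ g)
      ∧ (Ideal.Quotient.mk (Ideal.span {π ^ n}) π) ^ ((n + 1) / 2) ∣
        ((χ₁ g : O ⧸ Ideal.span {π ^ n}) - η₁ g)
      ∧ (Ideal.Quotient.mk (Ideal.span {π ^ n}) π) ^ ((n + 1) / 2) ∣
        ((χ₁ g : O ⧸ Ideal.span {π ^ n}) - η₂ g) := by
  have hprime : Prime π := UniqueFactorizationMonoid.irreducible_iff_prime.mp hπ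
  intro g
  set k := (n + 1) / 2 with hkdef
  have hkn : k ≤ n := by omega
  have hkm : k ≤ m := by omega
  have h2k : 2 * k ≤ n + 1 := by omega
  set A : O ⧸ Ideal.span {π ^ n} := (χ₁ g : O ⧸ Ideal.span {π ^ n}) with hA
  set B : O ⧸ Ideal.span {π ^ n} := (χ₂ g : O ⧸ Ideal.span {π ^ n}) with hB
  set C : O ⧸ Ideal.span {π ^ n} := (η₁ g : O ⧸ Ideal.span {π ^ n}) with hC
  set D : O ⧸ Ideal.span {π ^ n} := (η₂ g : O ⧸ Ideal.span {π ^ n}) with hD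
  have h1 : A + B = C + D := ((hχ g).1).symm.trans ((hη g).1)
  have h2' : A * B = C * D := ((hχ g).2).symm.trans ((hη g).2)
  have hAB : (Ideal.Quotient.mk (Ideal.span {π ^ n}) π) ^ k ∣ A - B :=
    dvd_trans (pow_dvd_pow _ hkm) (hm g)
  refine ⟨hAB, ?_⟩
  obtain ⟨a, ha⟩ := Ideal.Quotient.mk_surjective (A - C)
  obtain ⟨b, hb⟩ := Ideal.Quotient.mk_surjective (A - D)
  have hprod : (A - C) * (A - D) = 0 := by linear_combination A * h1 - h2'
  have hsum : (A - C) + (A - D) = A - B := by linear_combination h1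
  have habO : π ^ n ∣ a * b := by
    rw [← quot_pow_dvd_iff π le_rfl]
    rw [_root_.map_mul, ha, hb, hprod]
    exact dvd_zero _
  have hsO : π ^ k ∣ a + b := by
    rw [← quot_pow_dvd_iff π hkn]
    rw [map_add, ha, hb, hsum]
    exact hAB
  obtain ⟨hkA, hkB⟩ := key_dvd hprime h2k habO hsO
  constructor
  · rw [← ha]; exact (quot_pow_dvd_iff π hkn a).mpr hkA
  · rw [← hb]; exact (quot_pow_dvd_iff π hkn b).mpr hkB
end

section
/- Let (χ₁, χ₂) and (η₁, η₂) be two pairs of conjugate characters of ρ modulo π^n, and suppose m(χ₁,χ₂) < n/2. Then, up to swapping η₁ and η₂, one has χ₁ ≡ η₁ and χ₂ ≡ η₂ modulo π^(n−m(χ₁,χ₂)). -/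
open Matrix

/-- Divisibility by powers of `π` transfers between `O` and `O ⧸ (π ^ n)` for exponents `≤ n`. -/
lemma aux_mk_pow_dvd_iff {O : Type*} [CommRing O] (π : O) {n k : ℕ} (hk : k ≤ n) (a : O) :
    (Ideal.Quotient.mk (Ideal.span {π ^ n}) π) ^ k ∣ Ideal.Quotient.mk (Ideal.span {π ^ n}) a
      ↔ π ^ k ∣ a := by
  constructor
  · rintro ⟨t, ht⟩
    obtain ⟨c, rfl⟩ := Ideal.Quotient.mk_surjective t
    rw [← map_pow, ← _root_.map_mul] at ht
    have h2 := Ideal.Quotient.eq.mp ht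
    rw [Ideal.mem_span_singleton] at h2
    obtain ⟨d, hd⟩ := h2
    have hπn : π ^ n = π ^ k * π ^ (n - k) := by
      rw [← pow_add, Nat.add_sub_cancel' hk]
    exact ⟨c + π ^ (n - k) * d, by linear_combination hd + d * hπn⟩
  · rintro ⟨c, rfl⟩
    exact ⟨Ideal.Quotient.mk _ c, by rw [← map_pow, ← _root_.map_mul]⟩

/-- In a DVR, if `π ^ n ∣ a * b` and `π ^ j ∤ a` (with `j ≤ n`), then `π ^ (n - j + 1) ∣ b`. -/
lemma aux_dvd_of_pow_dvd_mul {O : Type*} [CommRing O] [IsDomain O] [IsDiscreteValuationRing O]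
    {π : O} (hπ : Irreducible π) {n j : ℕ} (hj : j ≤ n) {a b : O}
    (h : π ^ n ∣ a * b) (ha : ¬ π ^ j ∣ a) : π ^ (n - j + 1) ∣ b := by
  have ha0 : a ≠ 0 := by rintro rfl; exact ha (dvd_zero _)
  obtain ⟨s, u, hu⟩ := IsDiscreteValuationRing.associated_pow_irreducible ha0 hπ
  have hsj : s < j := by
    by_contra hle
    push_neg at hle
    exact ha ((Units.dvd_mul_right).mp (hu ▸ pow_dvd_pow π hle))
  have haeq : a = π ^ s * ↑u⁻¹ := by
    rw [← hu, mul_assoc, Units.mul_inv, mul_one]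
  have h' : π ^ s * π ^ (n - s) ∣ π ^ s * (↑u⁻¹ * b) := by
    rw [← pow_add, Nat.add_sub_cancel' (le_trans hsj.le hj)]
    have : a * b = π ^ s * (↑u⁻¹ * b) := by rw [haeq]; ring
    rwa [this] at h
  have h'' : π ^ (n - s) ∣ ↑u⁻¹ * b :=
    (mul_dvd_mul_iff_left (pow_ne_zero s hπ.ne_zero)).mp h'
  exact dvd_trans (pow_dvd_pow π (by omega)) ((Units.dvd_mul_left).mp h'')

/-- Quotient version: if `x * y = 0` in `O ⧸ (π ^ n)` and `π̄ ^ j ∤ x`, then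
`π̄ ^ (n - j + 1) ∣ y`. -/
lemma aux_keyR {O : Type*} [CommRing O] [IsDomain O] [IsDiscreteValuationRing O]
    {π : O} (hπ : Irreducible π) {n j : ℕ} (hj : j ≤ n)
    {x y : O ⧸ Ideal.span {π ^ n}} (h : x * y = 0)
    (hx : ¬ (Ideal.Quotient.mk (Ideal.span {π ^ n}) π) ^ j ∣ x) :
    (Ideal.Quotient.mk (Ideal.span {π ^ n}) π) ^ (n - j + 1) ∣ y := by
  obtain ⟨a, rfl⟩ := Ideal.Quotient.mk_surjective x
  obtain ⟨b, rfl⟩ := Ideal.Quotient.mk_surjective y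
  rcases Nat.eq_zero_or_pos j with rfl | hj1
  · simp at hx
  rw [aux_mk_pow_dvd_iff π hj] at hx
  rw [← _root_.map_mul, Ideal.Quotient.eq_zero_iff_mem, Ideal.mem_span_singleton] at h
  rw [aux_mk_pow_dvd_iff π (by omega)]
  exact aux_dvd_of_pow_dvd_mul hπ hj h hx

/-- If `(χ₁,χ₂)` and `(η₁,η₂)` are two pairs of conjugate characters modulo `π^n`, and
`m = m(χ₁,χ₂) < n/2` is the largest integer with `χ₁ ≡ χ₂ (mod π^m)`, then up to
swapping `η₁` and `η₂` one has `χ₁ ≡ η₁` and `χ₂ ≡ η₂` modulo `π^(n-m)`. -/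
theorem conj_pairs_congruent_of_small_m
    {O : Type*} [CommRing O] [IsDomain O] [IsDiscreteValuationRing O]
    (π : O) (hπ : Irreducible π) (h2 : IsUnit (2 : O))
    {G : Type*} [Group G] (n : ℕ)
    (ρ : G →* GL (Fin 2) O)
    (χ₁ χ₂ η₁ η₂ : G →* (O ⧸ Ideal.span {π ^ n})ˣ)
    (hχ : IsConjPair π n ρ χ₁ χ₂) (hη : IsConjPair π n ρ η₁ η₂)
    (m : ℕ) (hm2 : 2 * m < n)
    (hm : ∀ g : G, (Ideal.Quotient.mk (Ideal.span {π ^ n}) π) ^ m ∣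
        ((χ₁ g : O ⧸ Ideal.span {π ^ n}) - χ₂ g))
    (hmax : ¬ ∀ g : G, (Ideal.Quotient.mk (Ideal.span {π ^ n}) π) ^ (m + 1) ∣
        ((χ₁ g : O ⧸ Ideal.span {π ^ n}) - χ₂ g)) :
    (∀ g : G,
      (Ideal.Quotient.mk (Ideal.span {π ^ n}) π) ^ (n - m) ∣
        ((χ₁ g : O ⧸ Ideal.span {π ^ n}) - η₁ g)
      ∧ (Ideal.Quotient.mk (Ideal.span {π ^ n}) π) ^ (n - m) ∣
        ((χ₂ g : O ⧸ Ideal.span {π ^ n}) - η₂ g))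
    ∨ (∀ g : G,
      (Ideal.Quotient.mk (Ideal.span {π ^ n}) π) ^ (n - m) ∣
        ((χ₁ g : O ⧸ Ideal.span {π ^ n}) - η₂ g)
      ∧ (Ideal.Quotient.mk (Ideal.span {π ^ n}) π) ^ (n - m) ∣
        ((χ₂ g : O ⧸ Ideal.span {π ^ n}) - η₁ g)) := by
  set p : O ⧸ Ideal.span {π ^ n} := Ideal.Quotient.mk (Ideal.span {π ^ n}) π with hp
  push_neg at hmax
  obtain ⟨g₀, hg₀⟩ := hmax
  -- the product identity `(χ₁ g - η₁ g)(χ₁ g - η₂ g) = 0`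
  have hAB : ∀ (ν₁ ν₂ : G →* (O ⧸ Ideal.span {π ^ n})ˣ), IsConjPair π n ρ ν₁ ν₂ → ∀ g : G,
      ((χ₁ g : O ⧸ Ideal.span {π ^ n}) - ν₁ g) * ((χ₁ g : O ⧸ Ideal.span {π ^ n}) - ν₂ g) = 0 := by
    intro ν₁ ν₂ hν g
    have hs : (χ₁ g : O ⧸ Ideal.span {π ^ n}) + χ₂ g = (ν₁ g : O ⧸ Ideal.span {π ^ n}) + ν₂ g := (hχ g).1.symm.trans (hν g).1
    have hd : (χ₁ g : O ⧸ Ideal.span {π ^ n}) * χ₂ g = (ν₁ g : O ⧸ Ideal.span {π ^ n}) * ν₂ g := (hχ g).2.symm.trans (hν g).2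
    linear_combination (χ₁ g : O ⧸ Ideal.span {π ^ n}) * hs - hd
  -- the key directional lemma
  have key : ∀ (ν₁ ν₂ : G →* (O ⧸ Ideal.span {π ^ n})ˣ), IsConjPair π n ρ ν₁ ν₂ →
      ¬ p ^ (m + 1) ∣ ((χ₁ g₀ : O ⧸ Ideal.span {π ^ n}) - ν₁ g₀) →
      ∀ g : G, p ^ (n - m) ∣ ((χ₁ g : O ⧸ Ideal.span {π ^ n}) - ν₂ g) := by
    intro ν₁ ν₂ hν hA0 g
    have hB0 : p ^ (n - m) ∣ ((χ₁ g₀ : O ⧸ Ideal.span {π ^ n}) - ν₂ g₀) := by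
      have := aux_keyR hπ (by omega : m + 1 ≤ n) (hAB ν₁ ν₂ hν g₀) hA0
      rwa [show n - (m + 1) + 1 = n - m by omega] at this
    by_contra hBg
    have hAg : p ^ (m + 1) ∣ ((χ₁ g : O ⧸ Ideal.span {π ^ n}) - ν₁ g) := by
      have hcomm : ((χ₁ g : O ⧸ Ideal.span {π ^ n}) - ν₂ g) * ((χ₁ g : O ⧸ Ideal.span {π ^ n}) - ν₁ g) = 0 := by
        rw [mul_comm]; exact hAB ν₁ ν₂ hν g
      have := aux_keyR hπ (Nat.sub_le n m) hcomm hBg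
      rwa [show n - (n - m) + 1 = m + 1 by omega] at this
    have hAh : ¬ p ^ (m + 1) ∣ ((χ₁ (g₀ * g) : O ⧸ Ideal.span {π ^ n}) - ν₁ (g₀ * g)) := by
      intro hdvd
      apply hA0
      have e : ((χ₁ g₀ : O ⧸ Ideal.span {π ^ n}) - ν₁ g₀) * (ν₁ g : O ⧸ Ideal.span {π ^ n})
          = ((χ₁ (g₀ * g) : O ⧸ Ideal.span {π ^ n}) - ν₁ (g₀ * g))
            - (χ₁ g₀ : O ⧸ Ideal.span {π ^ n}) * ((χ₁ g : O ⧸ Ideal.span {π ^ n}) - ν₁ g) := by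
        rw [_root_.map_mul, _root_.map_mul, Units.val_mul, Units.val_mul]; ring
      have h1 : p ^ (m + 1) ∣ ((χ₁ g₀ : O ⧸ Ideal.span {π ^ n}) - ν₁ g₀) * (ν₁ g : O ⧸ Ideal.span {π ^ n}) := by
        rw [e]; exact dvd_sub hdvd (hAg.mul_left _)
      exact ((ν₁ g).isUnit.dvd_mul_right).mp h1
    have hBh : p ^ (n - m) ∣ ((χ₁ (g₀ * g) : O ⧸ Ideal.span {π ^ n}) - ν₂ (g₀ * g)) := by
      have := aux_keyR hπ (by omega : m + 1 ≤ n) (hAB ν₁ ν₂ hν (g₀ * g)) hAh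
      rwa [show n - (m + 1) + 1 = n - m by omega] at this
    apply hBg
    have e2 : (χ₁ g₀ : O ⧸ Ideal.span {π ^ n}) * ((χ₁ g : O ⧸ Ideal.span {π ^ n}) - ν₂ g)
        = ((χ₁ (g₀ * g) : O ⧸ Ideal.span {π ^ n}) - ν₂ (g₀ * g))
          - ((χ₁ g₀ : O ⧸ Ideal.span {π ^ n}) - ν₂ g₀) * (ν₂ g : O ⧸ Ideal.span {π ^ n}) := by
      rw [_root_.map_mul, _root_.map_mul, Units.val_mul, Units.val_mul]; ring
    have h2' : p ^ (n - m) ∣ (χ₁ g₀ : O ⧸ Ideal.span {π ^ n}) * ((χ₁ g : O ⧸ Ideal.span {π ^ n}) - ν₂ g) := by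
      rw [e2]; exact dvd_sub hBh (hB0.mul_right _)
    exact ((χ₁ g₀).isUnit.dvd_mul_left).mp h2'
  -- dichotomy at g₀
  have hsum : ((χ₁ g₀ : O ⧸ Ideal.span {π ^ n}) - η₁ g₀) + ((χ₁ g₀ : O ⧸ Ideal.span {π ^ n}) - η₂ g₀)
      = (χ₁ g₀ : O ⧸ Ideal.span {π ^ n}) - χ₂ g₀ := by
    have hs : (χ₁ g₀ : O ⧸ Ideal.span {π ^ n}) + χ₂ g₀ = (η₁ g₀ : O ⧸ Ideal.span {π ^ n}) + η₂ g₀ :=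
      (hχ g₀).1.symm.trans (hη g₀).1
    linear_combination hs
  have hη' : IsConjPair π n ρ η₂ η₁ := fun g =>
    ⟨(hη g).1.trans (add_comm _ _), (hη g).2.trans (mul_comm _ _)⟩
  by_cases hA0 : p ^ (m + 1) ∣ ((χ₁ g₀ : O ⧸ Ideal.span {π ^ n}) - η₁ g₀)
  · have hB0 : ¬ p ^ (m + 1) ∣ ((χ₁ g₀ : O ⧸ Ideal.span {π ^ n}) - η₂ g₀) := fun h =>
      hg₀ (by rw [← hsum]; exact dvd_add hA0 h)
    left
    intro g
    have h1 := key η₂ η₁ hη' hB0 g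
    refine ⟨h1, ?_⟩
    have hs : (χ₁ g : O ⧸ Ideal.span {π ^ n}) + χ₂ g = (η₁ g : O ⧸ Ideal.span {π ^ n}) + η₂ g := (hχ g).1.symm.trans (hη g).1
    have e : (χ₂ g : O ⧸ Ideal.span {π ^ n}) - η₂ g = -((χ₁ g : O ⧸ Ideal.span {π ^ n}) - η₁ g) := by linear_combination hs
    rw [e]
    exact dvd_neg.mpr h1
  · right
    intro g
    have h1 := key η₁ η₂ hη hA0 g
    refine ⟨h1, ?_⟩
    have hs : (χ₁ g : O ⧸ Ideal.span {π ^ n}) + χ₂ g = (η₁ g : O ⧸ Ideal.span {π ^ n}) + η₂ g := (hχ g).1.symm.trans (hη g).1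
    have e : (χ₂ g : O ⧸ Ideal.span {π ^ n}) - η₁ g = -((χ₁ g : O ⧸ Ideal.span {π ^ n}) - η₂ g) := by linear_combination hs
    rw [e]
    exact dvd_neg.mpr h1
end

section
/- Let g ∈ M₂(O) be a matrix whose reduction mod π is not a scalar matrix, and suppose its characteristic polynomial factors as (t−α)(t−β) mod π^n for some α, β ∈ O/π^n O. Then there exists a basis (v₁, v₂) of the free module (O/π^n O)² with respect to which g mod π^n is represented by the matrix [[α, 1],[0, β]]. -/
open Matrix

lemma triangular_of_good_vector
    {O : Type*} [CommRing O] [IsDomain O] [IsDiscreteValuationRing O]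
    (π : O) (hπ : Irreducible π) (n : ℕ)
    (g : Matrix (Fin 2) (Fin 2) O)
    (α β : O ⧸ Ideal.span {π ^ n})
    (htr : Ideal.Quotient.mk (Ideal.span {π ^ n}) (Matrix.trace g) = α + β)
    (hdet : Ideal.Quotient.mk (Ideal.span {π ^ n}) (Matrix.det g) = α * β)
    (w : Fin 2 → O)
    (hw : Ideal.Quotient.mk (Ideal.span {π})
        (g.mulVec w 0 * w 1 - g.mulVec w 1 * w 0) ≠ 0) :
    ∃ P : (Matrix (Fin 2) (Fin 2) (O ⧸ Ideal.span {π ^ n}))ˣ,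
      (P⁻¹ : (Matrix (Fin 2) (Fin 2) (O ⧸ Ideal.span {π ^ n}))ˣ).val
          * g.map (Ideal.Quotient.mk (Ideal.span {π ^ n})) * P.val
        = !![α, 1; 0, β] := by
  set f := Ideal.Quotient.mk (Ideal.span {π ^ n}) with hf
  obtain ⟨b, hb⟩ := Ideal.Quotient.mk_surjective β
  set v₁ : Fin 2 → O := g.mulVec w - b • w with hv₁
  set P₀ : Matrix (Fin 2) (Fin 2) O := !![v₁ 0, w 0; v₁ 1, w 1] with hP₀
  have hdP : P₀.det = g.mulVec w 0 * w 1 - g.mulVec w 1 * w 0 := by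
    simp [hP₀, Matrix.det_fin_two_of, hv₁, Matrix.vecHead, Matrix.vecTail]; ring
  have hu : IsUnit P₀.det := by
    rw [← IsLocalRing.notMem_maximalIdeal, hπ.maximalIdeal_eq]
    intro hmem
    exact hw (by rw [Ideal.Quotient.eq_zero_iff_mem, ← hdP]; exact hmem)
  have hP : IsUnit (P₀.map f) := by
    rw [Matrix.isUnit_iff_isUnit_det, ← RingHom.mapMatrix_apply, ← RingHom.map_det]
    exact hu.map f
  refine ⟨hP.unit, ?_⟩
  have htr' : f (g 0 0) + f (g 1 1) = α + β := by
    rw [← map_add]; rw [Matrix.trace_fin_two] at htr; exact htr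
  have hdet' : f (g 0 0) * f (g 1 1) - f (g 0 1) * f (g 1 0) = α * β := by
    rw [← _root_.map_mul, ← _root_.map_mul, ← map_sub]; rw [Matrix.det_fin_two] at hdet; exact hdet
  have key : g.map f * hP.unit.val = hP.unit.val * !![α, 1; 0, β] := by
    have hval : hP.unit.val = P₀.map f := rfl
    rw [hval]
    ext i j
    fin_cases i <;> fin_cases j <;>
      simp [Matrix.mul_apply, Fin.sum_univ_two, Matrix.map_apply, hP₀, hv₁,
        Matrix.mulVec, dotProduct, Fin.sum_univ_two, map_sub, map_add, _root_.map_mul, hb, show f b = β from hb, Matrix.vecHead, Matrix.vecTail]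
    · linear_combination (f (w 0) * f (g 0 0) + f (w 1) * f (g 0 1)) * htr'
        - f (w 0) * hdet'
    · ring
    · linear_combination (f (w 0) * f (g 1 0) + f (w 1) * f (g 1 1)) * htr'
        - f (w 1) * hdet'
    · ring
  calc (hP.unit⁻¹).val * (g.map f) * hP.unit.val
      = (hP.unit⁻¹).val * (g.map f * hP.unit.val) := by rw [mul_assoc]
    _ = (hP.unit⁻¹).val * (hP.unit.val * !![α, 1; 0, β]) := by rw [key]
    _ = ((hP.unit⁻¹).val * hP.unit.val) * !![α, 1; 0, β] := by rw [mul_assoc]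
    _ = !![α, 1; 0, β] := by rw [Units.inv_mul, one_mul]

/-- If `g ∈ M₂(O)` is not scalar modulo `π` and its characteristic polynomial factors as
`(t-α)(t-β)` mod `π^n`, then there is a basis of `(O/π^n)²` (i.e. a change-of-basis matrix
`P ∈ GL₂(O/π^n)`) in which `g mod π^n` is represented by `[[α, 1], [0, β]]`. -/
theorem boundary_point_triangular_basis
    {O : Type*} [CommRing O] [IsDomain O] [IsDiscreteValuationRing O]
    (π : O) (hπ : Irreducible π) (n : ℕ)
    (g : Matrix (Fin 2) (Fin 2) O)
    (hns : ¬ ∃ c : O, g.map (Ideal.Quotient.mk (Ideal.span {π}))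
        = Ideal.Quotient.mk (Ideal.span {π}) c • (1 : Matrix (Fin 2) (Fin 2) (O ⧸ Ideal.span {π})))
    (α β : O ⧸ Ideal.span {π ^ n})
    (htr : Ideal.Quotient.mk (Ideal.span {π ^ n}) (Matrix.trace g) = α + β)
    (hdet : Ideal.Quotient.mk (Ideal.span {π ^ n}) (Matrix.det g) = α * β) :
    ∃ P : (Matrix (Fin 2) (Fin 2) (O ⧸ Ideal.span {π ^ n}))ˣ,
      (P⁻¹ : (Matrix (Fin 2) (Fin 2) (O ⧸ Ideal.span {π ^ n}))ˣ).val
          * g.map (Ideal.Quotient.mk (Ideal.span {π ^ n})) * P.val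
        = !![α, 1; 0, β] := by
  set q := Ideal.Quotient.mk (Ideal.span {π}) with hq
  have hexp : ∀ w : Fin 2 → O,
      q (g.mulVec w 0 * w 1 - g.mulVec w 1 * w 0)
        = (q (g 0 0) * q (w 0) + q (g 0 1) * q (w 1)) * q (w 1)
          - (q (g 1 0) * q (w 0) + q (g 1 1) * q (w 1)) * q (w 0) := by
    intro w
    simp [Matrix.mulVec, dotProduct, Fin.sum_univ_two, map_sub, map_add, _root_.map_mul]
  obtain ⟨w, hw⟩ : ∃ w : Fin 2 → O,
      q (g.mulVec w 0 * w 1 - g.mulVec w 1 * w 0) ≠ 0 := by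
    by_cases h10 : q (g 1 0) ≠ 0
    · refine ⟨![1, 0], ?_⟩
      rw [hexp]
      simpa using h10
    · by_cases h01 : q (g 0 1) ≠ 0
      · refine ⟨![0, 1], ?_⟩
        rw [hexp]
        simpa using h01
      · push_neg at h10 h01
        have hne : q (g 0 0) ≠ q (g 1 1) := by
          intro heq
          refine hns ⟨g 0 0, ?_⟩
          ext i j
          fin_cases i <;> fin_cases j <;>
            simp [Matrix.map_apply, Matrix.one_apply, h10, h01, ← heq, ← hq]
        refine ⟨![1, 1], ?_⟩
        rw [hexp]
        simp only [Matrix.cons_val_zero, Matrix.cons_val_one, Matrix.head_cons,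
          RingHom.map_one, mul_one, h10, h01]
        intro h
        exact hne (by linear_combination h)
  exact triangular_of_good_vector π hπ n g α β htr hdet w hw
end

section
/- Let g ∈ M₂(O) be a matrix whose reduction mod π is not scalar. Then the characteristic polynomial of g is reducible modulo π^n (i.e. factors as (t−α)(t−β) with α, β ∈ O/π^n O) if and only if there exists a g-stable O-lattice Λ' with π^n O² ⊊ Λ' ⊊ O² such that Λ'/π^n O² is a free rank-1 O/π^n O-submodule of O²/π^n O² (equivalently, g is conjugate over O into upper triangular matrices modulo π^n). -/
open Matrix

private lemma aux_case1 {O : Type*} [CommRing O] (π a v0 v1 r0 r1 u : O) (n : ℕ)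
    (g : Matrix (Fin 2) (Fin 2) O)
    (h0 : g 0 0 * v0 + g 0 1 * v1 = a * v0 + π ^ n * r0)
    (h1 : g 1 0 * v0 + g 1 1 * v1 = a * v1 + π ^ n * r1)
    (hu : u * v0 = 1) :
    ∃ P : (Matrix (Fin 2) (Fin 2) O)ˣ,
      π ^ n ∣ ((P⁻¹ : (Matrix (Fin 2) (Fin 2) O)ˣ).val * g * P.val) 1 0 := by
  have hone : (1 : Matrix (Fin 2) (Fin 2) O) = !![1, 0; 0, 1] := by
    simp [Matrix.one_fin_two]
  refine ⟨⟨!![v0, 0; v1, 1], !![u, 0; -(v1 * u), 1], ?_, ?_⟩, ?_⟩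
  · rw [hone, Matrix.mul_fin_two]
    ext i j
    fin_cases i <;> fin_cases j <;> simp <;>
      first
        | linear_combination hu
        | linear_combination v1 * hu
        | linear_combination (-v1) * hu
        | ring
  · rw [hone, Matrix.mul_fin_two]
    ext i j
    fin_cases i <;> fin_cases j <;> simp <;>
      first
        | linear_combination hu
        | linear_combination v1 * hu
        | linear_combination (-v1) * hu
        | ring
  · refine ⟨r1 - v1 * u * r0, ?_⟩
    show (!![u, 0; -(v1 * u), 1] * g * !![v0, 0; v1, 1]) 1 0 = _
    rw [Matrix.eta_fin_two g, Matrix.mul_fin_two, Matrix.mul_fin_two]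
    simp
    linear_combination (-(v1 * u)) * h0 + h1 - (a * v1) * hu

private lemma aux_case2 {O : Type*} [CommRing O] (π a v0 v1 r0 r1 u : O) (n : ℕ)
    (g : Matrix (Fin 2) (Fin 2) O)
    (h0 : g 0 0 * v0 + g 0 1 * v1 = a * v0 + π ^ n * r0)
    (h1 : g 1 0 * v0 + g 1 1 * v1 = a * v1 + π ^ n * r1)
    (hu : u * v1 = 1) :
    ∃ P : (Matrix (Fin 2) (Fin 2) O)ˣ,
      π ^ n ∣ ((P⁻¹ : (Matrix (Fin 2) (Fin 2) O)ˣ).val * g * P.val) 1 0 := by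
  have hone : (1 : Matrix (Fin 2) (Fin 2) O) = !![1, 0; 0, 1] := by
    simp [Matrix.one_fin_two]
  refine ⟨⟨!![v0, 1; v1, 0], !![0, u; 1, -(v0 * u)], ?_, ?_⟩, ?_⟩
  · rw [hone, Matrix.mul_fin_two]
    ext i j
    fin_cases i <;> fin_cases j <;> simp <;>
      first
        | linear_combination hu
        | linear_combination v0 * hu
        | linear_combination (-v0) * hu
        | ring
  · rw [hone, Matrix.mul_fin_two]
    ext i j
    fin_cases i <;> fin_cases j <;> simp <;>
      first
        | linear_combination hu
        | linear_combination v0 * hu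
        | linear_combination (-v0) * hu
        | ring
  · refine ⟨r0 - v0 * u * r1, ?_⟩
    show (!![0, u; 1, -(v0 * u)] * g * !![v0, 1; v1, 0]) 1 0 = _
    rw [Matrix.eta_fin_two g, Matrix.mul_fin_two, Matrix.mul_fin_two]
    simp
    linear_combination h0 - (v0 * u) * h1 - (a * v0) * hu

/-- For `g ∈ M₂(O)` not scalar modulo `π`, the characteristic polynomial of `g` is
reducible modulo `π^n` if and only if `g` is conjugate over `O` into matrices that are
upper triangular modulo `π^n` (equivalently, the standard lattice `O²` admits a `g`-stable
free rank-1 quotient situation giving a point at distance `n` in the tree). -/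
theorem charpoly_reducible_iff_triangularisable
    {O : Type*} [CommRing O] [IsDomain O] [IsDiscreteValuationRing O]
    (π : O) (hπ : Irreducible π) (n : ℕ)
    (g : Matrix (Fin 2) (Fin 2) O)
    (hns : ¬ ∃ c : O, g.map (Ideal.Quotient.mk (Ideal.span {π}))
        = Ideal.Quotient.mk (Ideal.span {π}) c • (1 : Matrix (Fin 2) (Fin 2) (O ⧸ Ideal.span {π}))) :
    (∃ α β : O ⧸ Ideal.span {π ^ n},
        Ideal.Quotient.mk (Ideal.span {π ^ n}) (Matrix.trace g) = α + β
        ∧ Ideal.Quotient.mk (Ideal.span {π ^ n}) (Matrix.det g) = α * β)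
    ↔ (∃ P : (Matrix (Fin 2) (Fin 2) O)ˣ,
        π ^ n ∣ ((P⁻¹ : (Matrix (Fin 2) (Fin 2) O)ˣ).val * g * P.val) 1 0) := by
  constructor
  · rintro ⟨α, β, htr, hdet⟩
    obtain ⟨a, ha⟩ := Ideal.Quotient.mk_surjective α
    rw [Matrix.trace_fin_two, _root_.map_add] at htr
    rw [Matrix.det_fin_two, map_sub, _root_.map_mul, _root_.map_mul] at hdet
    have hdvd : π ^ n ∣ ((g 0 0 - a) * (g 1 1 - a) - g 0 1 * g 1 0) := by
      rw [← Ideal.mem_span_singleton, ← Ideal.Quotient.eq_zero_iff_mem]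
      simp only [map_sub, _root_.map_mul, ha]
      linear_combination hdet - α * htr
    obtain ⟨d, hd⟩ := hdvd
    have hnotall : ¬ (π ∣ (g 0 0 - a) ∧ π ∣ g 0 1 ∧ π ∣ g 1 0 ∧ π ∣ (g 1 1 - a)) := by
      rintro ⟨d1, d2, d3, d4⟩
      apply hns
      refine ⟨a, ?_⟩
      have key : ∀ x y : O, π ∣ (x - y) →
          Ideal.Quotient.mk (Ideal.span {π}) x = Ideal.Quotient.mk (Ideal.span {π}) y := by
        intro x y hxy
        rw [Ideal.Quotient.mk_eq_mk_iff_sub_mem, Ideal.mem_span_singleton]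
        exact hxy
      have key0 : ∀ x : O, π ∣ x → Ideal.Quotient.mk (Ideal.span {π}) x = 0 := by
        intro x hx
        rw [Ideal.Quotient.eq_zero_iff_mem, Ideal.mem_span_singleton]
        exact hx
      ext i j
      fin_cases i <;> fin_cases j <;>
        simp only [Matrix.map_apply, Matrix.smul_apply, Matrix.one_apply, smul_eq_mul] <;>
        norm_num
      · exact key _ _ d1
      · exact key0 _ d2
      · exact key0 _ d3
      · exact key _ _ d4
    have hunit : ∀ x : O, ¬ π ∣ x → ∃ u : O, u * x = 1 := by
      intro x hx
      have hxu : IsUnit x := by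
        by_contra hxu
        exact hx (Ideal.mem_span_singleton.mp (hπ.maximalIdeal_eq ▸
          (IsLocalRing.mem_maximalIdeal x).mpr hxu))
      obtain ⟨w, hw1, hw2⟩ := isUnit_iff_exists.mp hxu
      exact ⟨w, by rw [mul_comm]; exact hw1⟩
    by_cases h01 : π ∣ g 0 1
    · by_cases h00 : π ∣ (g 0 0 - a)
      · have h0 : g 0 0 * (g 1 1 - a) + g 0 1 * (-(g 1 0))
            = a * (g 1 1 - a) + π ^ n * d := by linear_combination hd
        have h1 : g 1 0 * (g 1 1 - a) + g 1 1 * (-(g 1 0))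
            = a * (-(g 1 0)) + π ^ n * 0 := by ring
        by_cases h11 : π ∣ (g 1 1 - a)
        · have h10 : ¬ π ∣ g 1 0 := fun hd10 => hnotall ⟨h00, h01, hd10, h11⟩
          obtain ⟨u, hu⟩ := hunit _ h10
          exact aux_case2 π a _ _ d 0 (-u) n g h0 h1 (by linear_combination hu)
        · obtain ⟨u, hu⟩ := hunit _ h11
          exact aux_case1 π a _ _ d 0 u n g h0 h1 hu
      · have h0 : g 0 0 * (-(g 0 1)) + g 0 1 * (g 0 0 - a)
            = a * (-(g 0 1)) + π ^ n * 0 := by ring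
        have h1 : g 1 0 * (-(g 0 1)) + g 1 1 * (g 0 0 - a)
            = a * (g 0 0 - a) + π ^ n * d := by linear_combination hd
        obtain ⟨u, hu⟩ := hunit _ h00
        exact aux_case2 π a _ _ 0 d u n g h0 h1 hu
    · have h0 : g 0 0 * (-(g 0 1)) + g 0 1 * (g 0 0 - a)
          = a * (-(g 0 1)) + π ^ n * 0 := by ring
      have h1 : g 1 0 * (-(g 0 1)) + g 1 1 * (g 0 0 - a)
          = a * (g 0 0 - a) + π ^ n * d := by linear_combination hd
      obtain ⟨u, hu⟩ := hunit _ h01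
      exact aux_case1 π a _ _ 0 d (-u) n g h0 h1 (by linear_combination hu)
  · rintro ⟨P, k, hk⟩
    set h : Matrix (Fin 2) (Fin 2) O := (P⁻¹ : (Matrix (Fin 2) (Fin 2) O)ˣ).val * g * P.val
      with hh
    have htr : Matrix.trace g = Matrix.trace h := by
      rw [hh, Matrix.trace_mul_cycle, Units.mul_inv, one_mul]
    have hprod : ((P⁻¹ : (Matrix (Fin 2) (Fin 2) O)ˣ).val).det * (P.val).det = 1 := by
      rw [← Matrix.det_mul, Units.inv_mul, Matrix.det_one]
    have hde : Matrix.det g = Matrix.det h := by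
      rw [hh]
      simp only [Matrix.det_mul]
      linear_combination (-(Matrix.det g)) * hprod
    refine ⟨Ideal.Quotient.mk (Ideal.span {π ^ n}) (h 0 0),
      Ideal.Quotient.mk (Ideal.span {π ^ n}) (h 1 1), ?_, ?_⟩
    · rw [htr, Matrix.trace_fin_two, _root_.map_add]
    · rw [hde, Matrix.det_fin_two, hk]
      have hz : Ideal.Quotient.mk (Ideal.span {π ^ n}) (π ^ n * k) = 0 := by
        rw [Ideal.Quotient.eq_zero_iff_mem]
        exact Ideal.mul_mem_right _ _ (Ideal.mem_span_singleton_self _)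
      rw [map_sub, _root_.map_mul, _root_.map_mul, hz, mul_zero, sub_zero]
end

section
/- Let P(t) ∈ O[t] be a monic quadratic polynomial with P(t) ≡ (t−α)(t−β) mod π^n for some α, β ∈ O with v(α−β) < n/2, where v is the normalized valuation. Then there exist α', β' ∈ O with P(t) = (t−α')(t−β') and v(α'−β') = v(α−β). -/
open Polynomial

/-- Quantitative Hensel's lemma for quadratics over a complete DVR: if a monic quadratic
`P` satisfies `P ≡ (t-α)(t-β) (mod π^n)` with `v(α-β) = r < n/2`, then `P` factors exactly
as `(t-α')(t-β')` with `v(α'-β') = r`. -/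
theorem hensel_quadratic
    {O : Type*} [CommRing O] [IsDomain O] [IsDiscreteValuationRing O]
    (π : O) (hπ : Irreducible π)
    [IsAdicComplete (Ideal.span {π}) O]
    (n : ℕ) (P : Polynomial O) (hmonic : P.Monic) (hdeg : P.natDegree = 2)
    (α β : O)
    (hcong : ∀ i : ℕ, π ^ n ∣ (P - (X - C α) * (X - C β)).coeff i)
    (r : ℕ) (hr2 : 2 * r < n)
    (hrdvd : π ^ r ∣ (α - β)) (hrnot : ¬ π ^ (r + 1) ∣ (α - β)) :
    ∃ α' β' : O, P = (X - C α') * (X - C β')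
      ∧ π ^ r ∣ (α' - β') ∧ ¬ π ^ (r + 1) ∣ (α' - β') := by
  -- nonunit elements are divisible by π
  have hπ0 : π ≠ 0 := hπ.ne_zero
  have hnonunit : ∀ x : O, ¬ IsUnit x → π ∣ x := by
    intro x hx
    have : x ∈ IsLocalRing.maximalIdeal O := hx
    rw [hπ.maximalIdeal_eq, Ideal.mem_span_singleton] at this
    exact this
  have hdvd_unit : ∀ x : O, π ∣ x → IsUnit x → False := by
    intro x h hx
    exact hπ.not_isUnit (isUnit_of_dvd_unit h hx)
  -- write n = 2r+1+m
  obtain ⟨m, rfl⟩ : ∃ m, n = 2*r+1+m := ⟨n - (2*r+1), by omega⟩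
  set N := 2*r+1+m with hN
  -- extract coefficients
  set b := P.coeff 1 with hb
  set c := P.coeff 0 with hc
  have hP : P = X ^ 2 + C b * X + C c := by
    ext i
    rcases i with _|_|_|i
    · simp [hc]
    · simp [hb]
    · have h2 := hmonic.coeff_natDegree
      rw [hdeg] at h2
      simp [h2, coeff_X_pow]
    · rw [coeff_eq_zero_of_natDegree_lt (by omega)]
      simp [coeff_X_pow, coeff_X]
  have hprod : (X - C α) * (X - C β) = X ^ 2 + C (-(α+β)) * X + C (α*β) := by
    simp only [C_neg, C_add, C_mul]; ring
  have hdiff : P - (X - C α) * (X - C β) = C (b + (α + β)) * X + C (c - α * β) := by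
    rw [hP, hprod]
    simp only [C_add, C_sub, C_neg, C_mul]
    ring
  obtain ⟨d₁, hd₁⟩ : π ^ N ∣ (b + (α + β)) := by
    have h1 : (C (b + (α + β)) * X + C (c - α * β)).coeff 1 = b + (α + β) := by simp
    rw [← h1, ← hdiff]; exact hcong 1
  obtain ⟨d₀, hd₀⟩ : π ^ N ∣ (c - α * β) := by
    have h0 : (C (b + (α + β)) * X + C (c - α * β)).coeff 0 = c - α * β := by simp
    rw [← h0, ← hdiff]; exact hcong 0
  obtain ⟨w, hw⟩ := hrdvd
  have hwunit : IsUnit w := by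
    by_contra h
    obtain ⟨w', hw'⟩ := hnonunit w h
    exact hrnot ⟨w', by rw [hw, hw', pow_succ]; ring⟩
  -- the auxiliary quadratic
  set u₁ : O := w + π ^ (r+1+m) * d₁ with hu₁
  set e₀ : O := d₁ * α + d₀ with he₀
  set Q : Polynomial O := X ^ 2 + C u₁ * X + C (π ^ (m+1) * e₀) with hQdef
  have hQmonic : Q.Monic := by
    rw [hQdef, add_assoc]
    apply Polynomial.monic_X_pow_add (n := 2)
    refine (degree_add_le _ _).trans_lt ?_
    rw [sup_lt_iff]
    constructor
    · exact (degree_C_mul_X_le _).trans_lt (by norm_num)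
    · exact degree_C_le.trans_lt (by norm_num)
  have hu₁unit : IsUnit u₁ := by
    by_contra h
    have h1 : π ∣ u₁ := hnonunit _ h
    have h2 : π ∣ w := by
      have : w = u₁ - π ^ (r+1+m) * d₁ := by rw [hu₁]; ring
      rw [this]
      exact dvd_sub h1 (Dvd.dvd.mul_right (dvd_pow_self π (by omega)) _)
    exact hdvd_unit w h2 hwunit
  obtain ⟨s₀, hroot, hs₀⟩ := HenselianRing.is_henselian (R := O) (I := Ideal.span {π})
    Q hQmonic 0 (by
      have heval : Q.eval 0 = π ^ (m+1) * e₀ := by simp [hQdef]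
      rw [heval, Ideal.mem_span_singleton]
      exact dvd_mul_of_dvd_left (dvd_pow_self π (Nat.succ_ne_zero m)) e₀)
    (by
      have : Q.derivative.eval 0 = u₁ := by
        rw [hQdef]
        simp only [derivative_add, derivative_X_pow, derivative_C_mul, derivative_X,
          derivative_C, mul_one, add_zero]
        simp
      rw [this]
      exact hu₁unit.map (Ideal.Quotient.mk (Ideal.span {π})))
  rw [sub_zero, Ideal.mem_span_singleton] at hs₀
  have hQs : s₀ ^ 2 + u₁ * s₀ + π ^ (m+1) * e₀ = 0 := by
    have := hroot
    simpa [hQdef, Polynomial.IsRoot, sq] using this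
  set α' : O := α + π ^ r * s₀ with hα'
  set β' : O := -b - α' with hβ'
  -- P(α') = 0
  have hkey : α' ^ 2 + b * α' + c =
      π ^ (2*r) * (s₀ ^ 2 + u₁ * s₀ + π ^ (m+1) * e₀) := by
    rw [hα', hu₁, he₀]
    linear_combination (α + π ^ r * s₀) * hd₁ + hd₀ + (π ^ r * s₀) * hw
  have hPα' : α' ^ 2 + b * α' + c = 0 := by rw [hkey, hQs, mul_zero]
  refine ⟨α', β', ?_, ?_, ?_⟩
  · rw [hP, hβ']
    have h1 : c = α' * (-b - α') := by linear_combination hPα'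
    rw [h1]
    simp only [C_mul, C_neg, C_sub]
    ring
  · have hu₂ : α' - β' = π ^ r * (w + 2*s₀ + π ^ (r+1+m) * d₁) := by
      rw [hα', hβ', hα']
      linear_combination hd₁ + hw
    exact ⟨_, hu₂⟩
  · intro hdvd
    set u₂ : O := w + 2*s₀ + π ^ (r+1+m) * d₁ with hu₂def
    have hu₂ : α' - β' = π ^ r * u₂ := by
      rw [hα', hβ', hα', hu₂def]
      linear_combination hd₁ + hw
    rw [hu₂, pow_succ] at hdvd
    have hπu₂ : π ∣ u₂ := (mul_dvd_mul_iff_left (pow_ne_zero r hπ0)).mp hdvd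
    have hu₂unit : IsUnit u₂ := by
      by_contra h
      exfalso
      apply hdvd_unit w ?_ hwunit
      obtain ⟨s', hs'⟩ := hs₀
      have : w = u₂ - 2*(π * s') - π ^ (r+1+m) * d₁ := by rw [hu₂def, hs']; ring
      rw [this]
      exact dvd_sub (dvd_sub (hnonunit _ h) ⟨2*s', by ring⟩)
        (Dvd.dvd.mul_right (dvd_pow_self π (by omega)) _)
    exact hdvd_unit u₂ hπu₂ hu₂unit
end

section
/- Let n(ρ) be finite, where n(ρ) is the supremum of n such that there exists a pair of conjugate characters modulo π^n, and let m(ρ) be the maximum of m(χ₁,χ₂) over pairs of conjugate characters modulo π^{n(ρ)}. Then either m(ρ) = n(ρ) or 2·m(ρ) < n(ρ). -/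
open Matrix

/-- If `n = n(ρ)` is finite (the largest integer admitting a pair of conjugate characters
modulo `π^n`) and `m = m(ρ)` is the maximum of `m(χ₁,χ₂)` over pairs of conjugate
characters modulo `π^n`, then either `m = n` or `2m < n`. -/
theorem m_rho_dichotomy
    {O : Type*} [CommRing O] [IsDomain O] [IsDiscreteValuationRing O]
    (π : O) (hπ : Irreducible π) (h2 : IsUnit (2 : O))
    {G : Type*} [Group G]
    (ρ : G →* GL (Fin 2) O)
    (n : ℕ)
    (hn_ex : ∃ χ₁ χ₂ : G →* (O ⧸ Ideal.span {π ^ n})ˣ, IsConjPair π n ρ χ₁ χ₂)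
    (hn_max : ∀ n' : ℕ,
      (∃ χ₁ χ₂ : G →* (O ⧸ Ideal.span {π ^ n'})ˣ, IsConjPair π n' ρ χ₁ χ₂) → n' ≤ n)
    (m : ℕ) (hm_le : m ≤ n)
    (hm_ex : ∃ χ₁ χ₂ : G →* (O ⧸ Ideal.span {π ^ n})ˣ, IsConjPair π n ρ χ₁ χ₂
      ∧ ∀ g : G, (Ideal.Quotient.mk (Ideal.span {π ^ n}) π) ^ m ∣
          ((χ₁ g : O ⧸ Ideal.span {π ^ n}) - χ₂ g))
    (hm_max : ∀ k ≤ n,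
      (∃ χ₁ χ₂ : G →* (O ⧸ Ideal.span {π ^ n})ˣ, IsConjPair π n ρ χ₁ χ₂
        ∧ ∀ g : G, (Ideal.Quotient.mk (Ideal.span {π ^ n}) π) ^ k ∣
            ((χ₁ g : O ⧸ Ideal.span {π ^ n}) - χ₂ g)) → k ≤ m) :
    m = n ∨ 2 * m < n := by
  rcases lt_or_ge (2 * m) n with h | h
  · exact Or.inr h
  · left
    refine le_antisymm hm_le ?_
    obtain ⟨χ₁, χ₂, hconj, hdvd⟩ := hm_ex
    set R := O ⧸ Ideal.span {π ^ n} with hR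
    set mk := Ideal.Quotient.mk (Ideal.span {π ^ n}) with hmk
    have hpn : (mk π) ^ n = 0 := by
      rw [← map_pow]
      exact Ideal.Quotient.eq_zero_iff_mem.2 (Ideal.subset_span rfl)
    have key : ∀ g h' : G, ((χ₁ g : R) - χ₂ g) * ((χ₁ h' : R) - χ₂ h') = 0 := by
      intro g h'
      obtain ⟨a, ha⟩ := hdvd g
      obtain ⟨b, hb⟩ := hdvd h'
      have hmm : (mk π) ^ m * (mk π) ^ m = 0 := by
        rw [← pow_add]
        obtain ⟨k, hk⟩ := Nat.exists_eq_add_of_le (show n ≤ m + m by omega)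
        rw [hk, pow_add, hpn, zero_mul]
      rw [ha, hb]
      calc (mk π) ^ m * a * ((mk π) ^ m * b)
          = ((mk π) ^ m * (mk π) ^ m) * (a * b) := by ring
        _ = 0 := by rw [hmm, zero_mul]
    have h2R : IsUnit (2 : R) := by
      have := h2.map mk
      rwa [map_ofNat] at this
    set u := h2R.unit with hu
    have hu2 : (u : R) = 2 := h2R.unit_spec
    set c : R := ↑u⁻¹ with hc0
    have hc : (2 : R) * c = 1 := by rw [← hu2, hc0, Units.mul_inv]
    set μ : G →* R :=
      { toFun := fun g => c * ((χ₁ g : R) + χ₂ g)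
        map_one' := by
          show c * ((χ₁ 1 : R) + χ₂ 1) = 1
          rw [_root_.map_one, _root_.map_one, Units.val_one]
          linear_combination hc
        map_mul' := by
          intro x y
          show c * ((χ₁ (x * y) : R) + χ₂ (x * y))
            = c * ((χ₁ x : R) + χ₂ x) * (c * ((χ₁ y : R) + χ₂ y))
          have e1 : ((χ₁ (x * y)) : R) = (χ₁ x : R) * (χ₁ y : R) := by
            rw [_root_.map_mul, Units.val_mul]
          have e2 : ((χ₂ (x * y)) : R) = (χ₂ x : R) * (χ₂ y : R) := by
            rw [_root_.map_mul, Units.val_mul]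
          linear_combination c * e1 + c * e2
            - c * ((χ₁ x : R) * (χ₁ y : R) + (χ₂ x : R) * (χ₂ y : R)) * hc
            + c * c * key x y } with hμ
    have hμval : ∀ g, μ g = c * ((χ₁ g : R) + χ₂ g) := fun g => rfl
    set ν : G →* Rˣ := μ.toHomUnits with hν
    have hνval : ∀ g, (ν g : R) = c * ((χ₁ g : R) + χ₂ g) := fun g => rfl
    refine hm_max n le_rfl ⟨ν, ν, ?_, ?_⟩
    · intro g
      obtain ⟨ht, hd⟩ := hconj g
      constructor
      · rw [ht, hνval]
        linear_combination (-(χ₁ g : R) - (χ₂ g : R)) * hc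
      · rw [hd, hνval]
        linear_combination (-(χ₁ g : R) * (χ₂ g : R) * (1 + 2 * c)) * hc - c * c * key g g
    · intro g
      rw [sub_self]
      exact dvd_zero _
end

section
/- Let k(ρ) be the largest integer k for which g ↦ (trace ρ(g))/2 mod π^k is a multiplicative character of G, and suppose n(ρ) is finite. If m(ρ) ≠ n(ρ) then k(ρ) = 2·m(ρ), and if m(ρ) = n(ρ) then k(ρ) = m(ρ). -/
open Matrix

/-- The map `g ↦ (trace ρ(g))/2 mod π^k` is a multiplicative character of `G`. -/
def IsHalfTraceMultiplicative {O : Type*} [CommRing O] {G : Type*} [Group G] (π : O) (k : ℕ)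
    (ρ : G →* GL (Fin 2) O) : Prop :=
  ∃ χ : G →* (O ⧸ Ideal.span {π ^ k})ˣ,
    ∀ g : G, 2 * (χ g : O ⧸ Ideal.span {π ^ k})
      = Ideal.Quotient.mk (Ideal.span {π ^ k}) (Matrix.trace (ρ g : Matrix (Fin 2) (Fin 2) O))


private lemma trace_sq_aux {O : Type*} [CommRing O] (A : Matrix (Fin 2) (Fin 2) O) :
    Matrix.trace (A * A) = Matrix.trace A ^ 2 - 2 * A.det := by
  simp [Matrix.trace_fin_two, Matrix.det_fin_two, Matrix.mul_apply, Fin.sum_univ_two]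
  ring

private lemma sq_dvd_aux {O : Type*} [CommRing O] [IsDomain O] {π : O} (hπ : Prime π) :
    ∀ k : ℕ, ∀ x : O, π ^ k ∣ x * x → π ^ ((k + 1) / 2) ∣ x := by
  intro k
  induction k using Nat.strong_induction_on with
  | _ k ih =>
    intro x hx
    match k, ih with
    | 0, _ => simp
    | 1, _ =>
      have hd : π ∣ x * x := by simpa using hx
      rcases hπ.dvd_mul.mp hd with h | h <;> simpa using h
    | (k + 2), ih =>
      have h1 : π ∣ x := by
        have hd : π ∣ x * x := dvd_trans (dvd_pow_self π (by omega)) hx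
        rcases hπ.dvd_mul.mp hd with h | h <;> exact h
      obtain ⟨y, rfl⟩ := h1
      have h3 : π ^ (k + 2) ∣ π ^ 2 * (y * y) := by
        have e : (π * y) * (π * y) = π ^ 2 * (y * y) := by ring
        rwa [e] at hx
      have h4 : π ^ 2 * π ^ k ∣ π ^ 2 * (y * y) := by
        rw [show π ^ 2 * π ^ k = π ^ (k + 2) by rw [pow_add]; ring]
        exact h3
      have h2 : π ^ k ∣ y * y := (mul_dvd_mul_iff_left (pow_ne_zero 2 hπ.ne_zero)).mp h4
      have ihy : π ^ ((k + 1) / 2) ∣ y := ih k (by omega) y h2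
      have hq : (k + 2 + 1) / 2 = (k + 1) / 2 + 1 := by omega
      rw [hq, pow_succ, mul_comm π y]
      exact mul_dvd_mul ihy dvd_rfl

private lemma det_eq_sq {O : Type*} [CommRing O] {G : Type*} [Group G] (π : O)
    (h2 : IsUnit (2 : O)) (k : ℕ) (ρ : G →* GL (Fin 2) O)
    (χ : G →* (O ⧸ Ideal.span {π ^ k})ˣ)
    (hχ : ∀ g : G, 2 * (χ g : O ⧸ Ideal.span {π ^ k})
      = Ideal.Quotient.mk (Ideal.span {π ^ k}) (Matrix.trace (ρ g : Matrix (Fin 2) (Fin 2) O)))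
    (g : G) :
    Ideal.Quotient.mk (Ideal.span {π ^ k}) (Matrix.det (ρ g : Matrix (Fin 2) (Fin 2) O))
      = (χ g : O ⧸ Ideal.span {π ^ k}) * χ g := by
  have h2Q : IsUnit (2 : O ⧸ Ideal.span {π ^ k}) := by
    rw [← map_ofNat (Ideal.Quotient.mk (Ideal.span {π ^ k})) 2]; exact h2.map _
  have hAA : ((ρ (g * g) : Matrix (Fin 2) (Fin 2) O))
      = (ρ g : Matrix (Fin 2) (Fin 2) O) * (ρ g : Matrix (Fin 2) (Fin 2) O) := by
    rw [_root_.map_mul]; rfl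
  have htr := hχ (g * g)
  rw [hAA, trace_sq_aux] at htr
  have hgg : (χ (g * g) : O ⧸ Ideal.span {π ^ k}) = χ g * χ g := by
    rw [_root_.map_mul]; rfl
  rw [hgg] at htr
  simp only [map_sub, map_pow, _root_.map_mul, map_ofNat] at htr
  apply h2Q.mul_left_cancel
  linear_combination htr - (Ideal.Quotient.mk (Ideal.span {π ^ k})
    (Matrix.trace (ρ g : Matrix (Fin 2) (Fin 2) O)) + 2 * (χ g : O ⧸ Ideal.span {π ^ k})) * hχ g

private lemma half_trace_of_pair {O : Type*} [CommRing O] {G : Type*} [Group G] {π : O}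
    (h2 : IsUnit (2 : O)) {n m s : ℕ} (hs2 : s ≤ 2 * m) (hsn : s ≤ n)
    {ρ : G →* GL (Fin 2) O}
    {χ₁ χ₂ : G →* (O ⧸ Ideal.span {π ^ n})ˣ} (hpair : IsConjPair π n ρ χ₁ χ₂)
    (hdvd : ∀ g : G, (Ideal.Quotient.mk (Ideal.span {π ^ n}) π) ^ m ∣
        ((χ₁ g : O ⧸ Ideal.span {π ^ n}) - χ₂ g)) :
    IsHalfTraceMultiplicative π s ρ := by
  have hle : Ideal.span {π ^ n} ≤ Ideal.span {π ^ s} :=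
    Ideal.span_singleton_le_span_singleton.mpr (pow_dvd_pow π hsn)
  set Q := O ⧸ Ideal.span {π ^ s} with hQ
  set e : O ⧸ Ideal.span {π ^ n} →+* Q := Ideal.Quotient.factor hle with he
  have h2Q : IsUnit (2 : Q) := by
    rw [← map_ofNat (Ideal.Quotient.mk (Ideal.span {π ^ s})) 2]; exact h2.map _
  set c : Q := ↑h2Q.unit⁻¹ with hc
  have hc2 : c * 2 = 1 := by
    rw [hc]; nth_rewrite 2 [← h2Q.unit_spec]; exact Units.inv_mul _
  have hz0 : (Ideal.Quotient.mk (Ideal.span {π ^ s}) π) ^ (2 * m) = 0 := by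
    rw [← map_pow, Ideal.Quotient.eq_zero_iff_mem]
    exact Ideal.mem_span_singleton.mpr (pow_dvd_pow π hs2)
  have hz : ∀ g h : G, ((e ↑(χ₁ g) : Q) - e ↑(χ₂ g)) * ((e ↑(χ₁ h) : Q) - e ↑(χ₂ h)) = 0 := by
    intro g h
    obtain ⟨a, ha⟩ := hdvd g
    obtain ⟨b, hb⟩ := hdvd h
    have h1 : (e ↑(χ₁ g) : Q) - e ↑(χ₂ g) = (Ideal.Quotient.mk (Ideal.span {π ^ s}) π) ^ m * e a := by
      rw [← map_sub, ha, _root_.map_mul, map_pow, he, Ideal.Quotient.factor_mk]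
    have h1' : (e ↑(χ₁ h) : Q) - e ↑(χ₂ h) = (Ideal.Quotient.mk (Ideal.span {π ^ s}) π) ^ m * e b := by
      rw [← map_sub, hb, _root_.map_mul, map_pow, he, Ideal.Quotient.factor_mk]
    rw [h1, h1']
    have h5 : (Ideal.Quotient.mk (Ideal.span {π ^ s}) π) ^ m * e a *
        ((Ideal.Quotient.mk (Ideal.span {π ^ s}) π) ^ m * e b)
        = (Ideal.Quotient.mk (Ideal.span {π ^ s}) π) ^ (2 * m) * (e a * e b) := by
      rw [two_mul, pow_add]; ring
    rw [h5, hz0, zero_mul]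
  set F : G → Q := fun g => c * (e ↑(χ₁ g) + e ↑(χ₂ g)) with hF
  have h2F : ∀ g : G, 2 * F g
      = Ideal.Quotient.mk (Ideal.span {π ^ s}) (Matrix.trace (ρ g : Matrix (Fin 2) (Fin 2) O)) := by
    intro g
    have hsum : (e (Ideal.Quotient.mk (Ideal.span {π ^ n})
        (Matrix.trace (ρ g : Matrix (Fin 2) (Fin 2) O))) : Q) = e ↑(χ₁ g) + e ↑(χ₂ g) := by
      rw [(hpair g).1, map_add]
    calc 2 * F g = (c * 2) * (e ↑(χ₁ g) + e ↑(χ₂ g)) := by rw [hF]; ring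
    _ = e ↑(χ₁ g) + e ↑(χ₂ g) := by rw [hc2, one_mul]
    _ = _ := by rw [← hsum, he, Ideal.Quotient.factor_mk]
  have hF1 : F 1 = 1 := by
    have : F 1 = c * 2 := by
      simp only [hF]
      rw [_root_.map_one χ₁, _root_.map_one χ₂, Units.val_one, _root_.map_one, one_add_one_eq_two]
    rw [this, hc2]
  have hFmul : ∀ g h : G, F (g * h) = F g * F h := by
    intro g h
    have hm1 : (e ↑(χ₁ (g * h)) : Q) = e ↑(χ₁ g) * e ↑(χ₁ h) := by
      rw [_root_.map_mul χ₁, Units.val_mul, _root_.map_mul]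
    have hm2 : (e ↑(χ₂ (g * h)) : Q) = e ↑(χ₂ g) * e ↑(χ₂ h) := by
      rw [_root_.map_mul χ₂, Units.val_mul, _root_.map_mul]
    have key : ((e ↑(χ₁ g) : Q) + e ↑(χ₂ g)) * ((e ↑(χ₁ h) : Q) + e ↑(χ₂ h))
        = 2 * (e ↑(χ₁ (g * h)) + e ↑(χ₂ (g * h))) := by
      rw [hm1, hm2]
      linear_combination (-1 : Q) * hz g h
    show c * ((e ↑(χ₁ (g * h)) : Q) + e ↑(χ₂ (g * h)))
        = (c * (e ↑(χ₁ g) + e ↑(χ₂ g))) * (c * (e ↑(χ₁ h) + e ↑(χ₂ h)))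
    linear_combination (-(c ^ 2)) * key
      - (c * ((e ↑(χ₁ (g * h)) : Q) + e ↑(χ₂ (g * h)))) * hc2
  refine ⟨MonoidHom.toHomUnits ⟨⟨F, hF1⟩, hFmul⟩, fun g => ?_⟩
  rw [MonoidHom.coe_toHomUnits]
  exact h2F g

/-- Relation between `k(ρ)`, `m(ρ)` and `n(ρ)`: if `m(ρ) ≠ n(ρ)` then `k(ρ) = 2 m(ρ)`,
and if `m(ρ) = n(ρ)` then `k(ρ) = m(ρ)`. -/
theorem k_rho_eq
    {O : Type*} [CommRing O] [IsDomain O] [IsDiscreteValuationRing O]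
    (π : O) (hπ : Irreducible π) (h2 : IsUnit (2 : O))
    {G : Type*} [Group G]
    (ρ : G →* GL (Fin 2) O)
    (n : ℕ)
    (hn_ex : ∃ χ₁ χ₂ : G →* (O ⧸ Ideal.span {π ^ n})ˣ, IsConjPair π n ρ χ₁ χ₂)
    (hn_max : ∀ n' : ℕ,
      (∃ χ₁ χ₂ : G →* (O ⧸ Ideal.span {π ^ n'})ˣ, IsConjPair π n' ρ χ₁ χ₂) → n' ≤ n)
    (m : ℕ) (hm_le : m ≤ n)
    (hm_ex : ∃ χ₁ χ₂ : G →* (O ⧸ Ideal.span {π ^ n})ˣ, IsConjPair π n ρ χ₁ χ₂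
      ∧ ∀ g : G, (Ideal.Quotient.mk (Ideal.span {π ^ n}) π) ^ m ∣
          ((χ₁ g : O ⧸ Ideal.span {π ^ n}) - χ₂ g))
    (hm_max : ∀ j ≤ n,
      (∃ χ₁ χ₂ : G →* (O ⧸ Ideal.span {π ^ n})ˣ, IsConjPair π n ρ χ₁ χ₂
        ∧ ∀ g : G, (Ideal.Quotient.mk (Ideal.span {π ^ n}) π) ^ j ∣
            ((χ₁ g : O ⧸ Ideal.span {π ^ n}) - χ₂ g)) → j ≤ m)
    (k : ℕ)
    (hk : IsHalfTraceMultiplicative π k ρ)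
    (hk_max : ∀ k' : ℕ, IsHalfTraceMultiplicative π k' ρ → k' ≤ k) :
    (m ≠ n → k = 2 * m) ∧ (m = n → k = m) := by
  obtain ⟨χ, hχ⟩ := hk
  have hdet := det_eq_sq π h2 k ρ χ hχ
  have hpairχ : IsConjPair π k ρ χ χ := fun g => ⟨by rw [← hχ g]; ring, hdet g⟩
  have hkn : k ≤ n := hn_max k ⟨χ, χ, hpairχ⟩
  obtain ⟨χ₁, χ₂, hpair, hdvd⟩ := hm_ex
  have hsk : min (2 * m) n ≤ k :=
    hk_max _ (half_trace_of_pair h2 (min_le_left _ _) (min_le_right _ _) hpair hdvd)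
  have hCn : k = n → m = n := by
    intro hkn'
    refine le_antisymm hm_le (hm_max n le_rfl ?_)
    subst hkn'
    exact ⟨χ, χ, hpairχ, fun g => by simp⟩
  have hle : Ideal.span {π ^ n} ≤ Ideal.span {π ^ k} :=
    Ideal.span_singleton_le_span_singleton.mpr (pow_dvd_pow π hkn)
  set e : O ⧸ Ideal.span {π ^ n} →+* O ⧸ Ideal.span {π ^ k} :=
    Ideal.Quotient.factor hle with he
  have hD : (k + 1) / 2 ≤ m := by
    refine hm_max _ (le_trans (by omega) hkn) ⟨χ₁, χ₂, hpair, fun g => ?_⟩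
    obtain ⟨x, hx⟩ := Ideal.Quotient.mk_surjective
      ((↑(χ₁ g) - ↑(χ₂ g) : O ⧸ Ideal.span {π ^ n}))
    have hsum : (e ↑(χ₁ g) : O ⧸ Ideal.span {π ^ k}) + e ↑(χ₂ g)
        = 2 * (χ g : O ⧸ Ideal.span {π ^ k}) := by
      rw [← _root_.map_add, ← (hpair g).1, he, Ideal.Quotient.factor_mk, hχ g]
    have hprod : (e ↑(χ₁ g) : O ⧸ Ideal.span {π ^ k}) * e ↑(χ₂ g)
        = (χ g : O ⧸ Ideal.span {π ^ k}) * χ g := by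
      rw [← _root_.map_mul, ← (hpair g).2, he, Ideal.Quotient.factor_mk, hdet g]
    have hδ : (Ideal.Quotient.mk (Ideal.span {π ^ k}) x)
        * (Ideal.Quotient.mk (Ideal.span {π ^ k}) x) = 0 := by
      have hx' : Ideal.Quotient.mk (Ideal.span {π ^ k}) x
          = (e ↑(χ₁ g) : O ⧸ Ideal.span {π ^ k}) - e ↑(χ₂ g) := by
        rw [← Ideal.Quotient.factor_mk hle x, hx, _root_.map_sub, he]
      rw [hx']
      linear_combination ((e ↑(χ₁ g) : O ⧸ Ideal.span {π ^ k}) + e ↑(χ₂ g)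
        + 2 * (χ g : O ⧸ Ideal.span {π ^ k})) * hsum - 4 * hprod
    have hx2 : π ^ k ∣ x * x := by
      rw [← Ideal.mem_span_singleton, ← Ideal.Quotient.eq_zero_iff_mem, _root_.map_mul]
      exact hδ
    obtain ⟨y, hy⟩ := sq_dvd_aux hπ.prime k x hx2
    rw [← hx, hy]
    exact ⟨Ideal.Quotient.mk _ y, by rw [_root_.map_mul, map_pow]⟩
  constructor
  · intro hmn
    have hlt : m < n := lt_of_le_of_ne hm_le hmn
    have hne : k ≠ n := fun hkn' => hmn (hCn hkn')
    omega
  · intro hmn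
    subst hmn
    omega
end

section
/- Suppose there is a basis of O² with respect to which every ρ(g), g ∈ G, is represented by a matrix [[a_g, b_g],[π^{2r} c_g, d_g]] with a_g ≡ d_g mod π^r. Then the map g ↦ (a_g + d_g)/2 ≡ (trace ρ(g))/2 mod π^{2r} is a multiplicative character G → (O/π^{2r} O)^×. -/
open Matrix

/-- If, in some basis, every `ρ(g)` is represented by `[[a_g, b_g],[π^{2r} c_g, d_g]]`
with `a_g ≡ d_g (mod π^r)`, then `g ↦ (a_g + d_g)/2 = (trace ρ(g))/2 mod π^{2r}` is a
multiplicative character `G → (O/π^{2r} O)ˣ`. -/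
theorem half_trace_multiplicative_of_band_shape
    {O : Type*} [CommRing O] [IsDomain O] [IsDiscreteValuationRing O]
    (π : O) (hπ : Irreducible π) (h2 : IsUnit (2 : O))
    {G : Type*} [Group G] (r : ℕ)
    (ρ : G →* GL (Fin 2) O)
    (a b c d : G → O)
    (hshape : ∀ g : G, (ρ g : Matrix (Fin 2) (Fin 2) O) = !![a g, b g; π ^ (2 * r) * c g, d g])
    (hcong : ∀ g : G, π ^ r ∣ (a g - d g)) :
    ∃ χ : G →* (O ⧸ Ideal.span {π ^ (2 * r)})ˣ,
      ∀ g : G, 2 * (χ g : O ⧸ Ideal.span {π ^ (2 * r)})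
        = Ideal.Quotient.mk (Ideal.span {π ^ (2 * r)}) (a g + d g)
      ∧ 2 * (χ g : O ⧸ Ideal.span {π ^ (2 * r)})
        = Ideal.Quotient.mk (Ideal.span {π ^ (2 * r)})
            (Matrix.trace (ρ g : Matrix (Fin 2) (Fin 2) O)) := by
  obtain ⟨e, he⟩ := h2
  set I : Ideal O := Ideal.span {π ^ (2 * r)} with hI
  set f : O →+* O ⧸ I := Ideal.Quotient.mk I with hf
  -- multiplicative identities from matrix multiplication
  have key : ∀ g₁ g₂ : G,
      a (g₁ * g₂) = a g₁ * a g₂ + b g₁ * (π ^ (2 * r) * c g₂) ∧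
      d (g₁ * g₂) = π ^ (2 * r) * c g₁ * b g₂ + d g₁ * d g₂ := by
    intro g₁ g₂
    have h := hshape (g₁ * g₂)
    rw [_root_.map_mul] at h
    have h' : (!![a g₁, b g₁; π ^ (2 * r) * c g₁, d g₁] *
        !![a g₂, b g₂; π ^ (2 * r) * c g₂, d g₂] : Matrix (Fin 2) (Fin 2) O)
        = !![a (g₁ * g₂), b (g₁ * g₂); π ^ (2 * r) * c (g₁ * g₂), d (g₁ * g₂)] := by
      rw [← hshape g₁, ← hshape g₂, ← h]
      rfl
    rw [Matrix.mul_fin_two] at h'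
    constructor
    · have := congrFun (congrFun h' 0) 0
      symm; simpa using this
    · have := congrFun (congrFun h' 1) 1
      symm; simpa using this
  have ha1 : a 1 = 1 := by
    have h := hshape 1
    rw [_root_.map_one] at h
    have := congrFun (congrFun h.symm 0) 0
    simpa [Matrix.one_apply] using this
  have hd1 : d 1 = 1 := by
    have h := hshape 1
    rw [_root_.map_one] at h
    have := congrFun (congrFun h.symm 1) 1
    simpa [Matrix.one_apply] using this
  -- the monoid hom into the quotient ring
  have hmul : ∀ g₁ g₂ : G,
      f ((↑e⁻¹ : O) * (a (g₁ * g₂) + d (g₁ * g₂)))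
        = f ((↑e⁻¹ : O) * (a g₁ + d g₁)) * f ((↑e⁻¹ : O) * (a g₂ + d g₂)) := by
    intro g₁ g₂
    rw [← _root_.map_mul f]
    rw [Ideal.Quotient.mk_eq_mk_iff_sub_mem]
    obtain ⟨ha, hd⟩ := key g₁ g₂
    obtain ⟨x, hx⟩ := hcong g₁
    obtain ⟨y, hy⟩ := hcong g₂
    have hee : (↑e⁻¹ : O) * 2 = 1 := by
      rw [← he]; exact e.inv_mul
    have expand : (↑e⁻¹ : O) * (a (g₁ * g₂) + d (g₁ * g₂)) -
        (↑e⁻¹ : O) * (a g₁ + d g₁) * ((↑e⁻¹ : O) * (a g₂ + d g₂))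
        = (↑e⁻¹ : O) * (↑e⁻¹ : O) *
          ((↑e⁻¹ : O) * 2 * 2 * (a (g₁ * g₂) + d (g₁ * g₂))
            - (a g₁ + d g₁) * (a g₂ + d g₂)) := by
      linear_combination (-(2 * (↑e⁻¹ : O) ^ 2 * (a (g₁ * g₂) + d (g₁ * g₂)))
        - (↑e⁻¹ : O) * (a (g₁ * g₂) + d (g₁ * g₂))) * hee
    rw [expand, hee, ha, hd]
    have : (1 : O) * 2 * (a g₁ * a g₂ + b g₁ * (π ^ (2 * r) * c g₂) +
        (π ^ (2 * r) * c g₁ * b g₂ + d g₁ * d g₂)) - (a g₁ + d g₁) * (a g₂ + d g₂)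
        = (a g₁ - d g₁) * (a g₂ - d g₂) +
          π ^ (2 * r) * (2 * (b g₁ * c g₂ + c g₁ * b g₂)) := by ring
    rw [this, hx, hy]
    have hπ2 : π ^ r * x * (π ^ r * y) = π ^ (2 * r) * (x * y) := by
      rw [two_mul, pow_add]; ring
    rw [hπ2]
    have : π ^ (2 * r) * (x * y) + π ^ (2 * r) * (2 * (b g₁ * c g₂ + c g₁ * b g₂))
        = π ^ (2 * r) * (x * y + 2 * (b g₁ * c g₂ + c g₁ * b g₂)) := by ring
    rw [this]
    exact Ideal.mul_mem_left _ _ (Ideal.mul_mem_right _ _ (Ideal.subset_span rfl))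
  have hone : f ((↑e⁻¹ : O) * (a 1 + d 1)) = 1 := by
    rw [ha1, hd1]
    have : (↑e⁻¹ : O) * (1 + 1) = 1 := by
      have := e.inv_mul
      rw [he] at this
      calc (↑e⁻¹ : O) * (1 + 1) = (↑e⁻¹ : O) * 2 := by ring
        _ = 1 := this
    rw [this, _root_.map_one]
  let φ : G →* (O ⧸ I) :=
    { toFun := fun g => f ((↑e⁻¹ : O) * (a g + d g))
      map_one' := hone
      map_mul' := hmul }
  have hφ1 : ∀ g, 2 * φ g = f (a g + d g) := by
    intro g
    have : (2 : O ⧸ I) = f 2 := (map_ofNat f 2).symm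
    rw [this]
    show f 2 * f ((↑e⁻¹ : O) * (a g + d g)) = f (a g + d g)
    rw [← _root_.map_mul f]
    congr 1
    have hee : (2 : O) * (↑e⁻¹ : O) = 1 := by rw [← he]; exact e.mul_inv
    calc 2 * ((↑e⁻¹ : O) * (a g + d g)) = 2 * (↑e⁻¹ : O) * (a g + d g) := by ring
      _ = a g + d g := by rw [hee, one_mul]
  refine ⟨φ.toHomUnits, fun g => ?_⟩
  have htr : Matrix.trace (ρ g : Matrix (Fin 2) (Fin 2) O) = a g + d g := by
    rw [hshape g, Matrix.trace_fin_two]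
    simp
  constructor
  · exact hφ1 g
  · rw [htr]; exact hφ1 g
end

section
/- Suppose h ∈ G is such that ρ(h) is diagonalizable over O with eigenvalues α, β ∈ O satisfying v(β−α) = r (a 'thin element'), and suppose g ↦ (trace ρ(g))/2 mod π^k is multiplicative. Then k ≤ 2r. [Key step: from (t−α)(t−β) ≡ (t−γ)² mod π^k with γ = (α+β)/2, deduce (α−β)² ≡ 0 mod π^k.] -/
open Matrix

/-- If `G` contains a thin element `h` (i.e. `ρ(h)` is diagonalizable over `O` with
eigenvalues `α, β` satisfying `v(β - α) = r`), and `g ↦ (trace ρ(g))/2 mod π^k` is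
multiplicative, then `k ≤ 2r`. -/
theorem k_le_two_r_of_thin_element
    {O : Type*} [CommRing O] [IsDomain O] [IsDiscreteValuationRing O]
    (π : O) (hπ : Irreducible π) (h2 : IsUnit (2 : O))
    {G : Type*} [Group G]
    (ρ : G →* GL (Fin 2) O)
    (h : G) (α β : O) (r : ℕ)
    (hdiag : ∃ P : (Matrix (Fin 2) (Fin 2) O)ˣ,
      (P⁻¹ : (Matrix (Fin 2) (Fin 2) O)ˣ).val * (ρ h : Matrix (Fin 2) (Fin 2) O) * P.val
        = Matrix.diagonal ![α, β])
    (hv : π ^ r ∣ (β - α) ∧ ¬ π ^ (r + 1) ∣ (β - α))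
    (k : ℕ)
    (hmult : ∃ χ : G →* (O ⧸ Ideal.span {π ^ k})ˣ,
      ∀ g : G, 2 * (χ g : O ⧸ Ideal.span {π ^ k})
        = Ideal.Quotient.mk (Ideal.span {π ^ k}) (Matrix.trace (ρ g : Matrix (Fin 2) (Fin 2) O))) :
    k ≤ 2 * r := by
  obtain ⟨P, hP⟩ := hdiag
  set I := Ideal.span {π ^ k} with hI
  obtain ⟨χ, hχ⟩ := hmult
  set M : Matrix (Fin 2) (Fin 2) O := (ρ h : Matrix (Fin 2) (Fin 2) O) with hM
  -- trace of ρ h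
  have htr1 : Matrix.trace M = α + β := by
    have h1 : Matrix.trace ((P⁻¹ : (Matrix (Fin 2) (Fin 2) O)ˣ).val * M * P.val)
        = Matrix.trace M := by
      rw [Matrix.trace_mul_cycle, Units.mul_inv, Matrix.one_mul]
    rw [hP] at h1
    rw [← h1]
    simp [Matrix.trace_diagonal, Fin.sum_univ_two]
  -- trace of ρ (h*h)
  have htr2 : Matrix.trace ((ρ (h * h) : Matrix (Fin 2) (Fin 2) O)) = α ^ 2 + β ^ 2 := by
    have hm : (ρ (h * h) : Matrix (Fin 2) (Fin 2) O) = M * M := by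
      rw [_root_.map_mul, Units.val_mul]
    have hconj : (P⁻¹ : (Matrix (Fin 2) (Fin 2) O)ˣ).val * (M * M) * P.val
        = Matrix.diagonal ![α, β] * Matrix.diagonal ![α, β] := by
      rw [← hP]
      have : M * M = M * (P.val * (P⁻¹ : (Matrix (Fin 2) (Fin 2) O)ˣ).val) * M := by
        rw [Units.mul_inv, Matrix.mul_one]
      rw [this]
      noncomm_ring
    have h1 : Matrix.trace ((P⁻¹ : (Matrix (Fin 2) (Fin 2) O)ˣ).val * (M * M) * P.val)
        = Matrix.trace (M * M) := by
      rw [Matrix.trace_mul_cycle, Units.mul_inv, Matrix.one_mul]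
    rw [hconj] at h1
    rw [hm, ← h1, Matrix.diagonal_mul_diagonal]
    simp [Matrix.trace_diagonal, Fin.sum_univ_two]
    ring
  have e1 := hχ h
  have e2 := hχ (h * h)
  rw [htr1] at e1
  rw [htr2, _root_.map_mul χ, Units.val_mul] at e2
  -- key congruence
  have key : Ideal.Quotient.mk I ((β - α) ^ 2) = 0 := by
    have hcalc : ((2 : O ⧸ I) * χ h) ^ 2 = 2 * (2 * ((χ h : O ⧸ I) * χ h)) := by
      ring
    rw [e1, e2] at hcalc
    have h2' : (Ideal.Quotient.mk I (2 : O)) = (2 : O ⧸ I) := map_ofNat _ 2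
    calc Ideal.Quotient.mk I ((β - α) ^ 2)
        = 2 * Ideal.Quotient.mk I (α ^ 2 + β ^ 2)
            - (Ideal.Quotient.mk I (α + β)) ^ 2 := by
          rw [← h2', ← _root_.map_mul, ← map_pow, ← map_sub]
          exact congrArg _ (by ring)
      _ = 0 := by rw [← hcalc]; ring
  have hdvd : π ^ k ∣ (β - α) ^ 2 := by
    rw [Ideal.Quotient.eq_zero_iff_mem, hI, Ideal.mem_span_singleton] at key
    exact key
  -- valuation argument
  obtain ⟨u, hu⟩ := hv.1
  have hπu : ¬ π ∣ u := by
    intro ⟨w, hw⟩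
    exact hv.2 ⟨w, by rw [hu, hw, pow_succ]; ring⟩
  by_contra hk
  push_neg at hk
  have hdvd' : π ^ (2 * r + 1) ∣ (β - α) ^ 2 := dvd_trans (pow_dvd_pow π hk) hdvd
  rw [hu] at hdvd'
  have : π ^ (2 * r) * π ∣ π ^ (2 * r) * u ^ 2 := by
    have : (π ^ r * u) ^ 2 = π ^ (2 * r) * u ^ 2 := by ring
    rw [this] at hdvd'
    rw [← pow_succ] 
    exact hdvd'
  have hπ0 : π ^ (2 * r) ≠ 0 := pow_ne_zero _ hπ.ne_zero
  have hπu2 : π ∣ u ^ 2 := (mul_dvd_mul_iff_left hπ0).mp this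
  have hprime : Prime π := hπ.prime
  rcases hprime.dvd_of_dvd_pow hπu2 with hd
  exact hπu hd
end

section
/- Let ε : G → O/π^n O be a group homomorphism to the additive group such that ε(g)·ε(h) = 0 for all g, h ∈ G, and let (χ₁, χ₂) be characters G → (O/π^n O)^× with χ₁·ε = χ₂·ε (pointwise products). Define η₁(g) = χ₁(g)(1+ε(g)) and η₂(g) = χ₂(g)(1−ε(g)). Then η₁ and η₂ are multiplicative characters G → (O/π^n O)^× and η₁ + η₂ = χ₁ + χ₂ pointwise. -/
/-- Let `ε : G → O/π^n O` be an additive character with `ε(g)ε(h) = 0` for all `g, h`, and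
let `χ₁, χ₂ : G → (O/π^n O)ˣ` be characters with `χ₁·ε = χ₂·ε`. Then
`η₁(g) = χ₁(g)(1+ε(g))` and `η₂(g) = χ₂(g)(1-ε(g))` are multiplicative characters and
`η₁ + η₂ = χ₁ + χ₂` pointwise. -/
theorem twisted_characters
    {O : Type*} [CommRing O] [IsDomain O] [IsDiscreteValuationRing O]
    (π : O) (hπ : Irreducible π)
    {G : Type*} [Group G] (n : ℕ)
    (ε : G → O ⧸ Ideal.span {π ^ n})
    (hε_add : ∀ g h : G, ε (g * h) = ε g + ε h)
    (hε_sq : ∀ g h : G, ε g * ε h = 0)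
    (χ₁ χ₂ : G →* (O ⧸ Ideal.span {π ^ n})ˣ)
    (hχε : ∀ g : G, (χ₁ g : O ⧸ Ideal.span {π ^ n}) * ε g
      = (χ₂ g : O ⧸ Ideal.span {π ^ n}) * ε g) :
    ∃ η₁ η₂ : G →* (O ⧸ Ideal.span {π ^ n})ˣ,
      (∀ g : G,
        (η₁ g : O ⧸ Ideal.span {π ^ n}) = (χ₁ g : O ⧸ Ideal.span {π ^ n}) * (1 + ε g)
        ∧ (η₂ g : O ⧸ Ideal.span {π ^ n}) = (χ₂ g : O ⧸ Ideal.span {π ^ n}) * (1 - ε g))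
      ∧ ∀ g : G,
        (η₁ g : O ⧸ Ideal.span {π ^ n}) + (η₂ g : O ⧸ Ideal.span {π ^ n})
          = (χ₁ g : O ⧸ Ideal.span {π ^ n}) + (χ₂ g : O ⧸ Ideal.span {π ^ n}) := by
  have hε1 : ε 1 = 0 := by
    have h := hε_add 1 1
    rw [mul_one] at h
    exact (left_eq_add.mp h)
  -- unit with value 1 + ε g
  let u : G → (O ⧸ Ideal.span {π ^ n})ˣ := fun g =>
    ⟨1 + ε g, 1 - ε g, by linear_combination - hε_sq g g, by linear_combination - hε_sq g g⟩
  refine ⟨{ toFun := fun g => χ₁ g * u g, map_one' := ?_, map_mul' := ?_ },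
          { toFun := fun g => χ₂ g * (u g)⁻¹, map_one' := ?_, map_mul' := ?_ },
          fun g => ⟨rfl, rfl⟩, fun g => ?_⟩
  · ext
    simp [u, hε1]
  · intro g h
    ext
    push_cast [u, hε_add, map_mul]
    linear_combination (-(χ₁ g : O ⧸ Ideal.span {π ^ n}) * (χ₁ h : O ⧸ Ideal.span {π ^ n})) * hε_sq g h
  · ext
    simp [u, hε1]
  · intro g h
    ext
    push_cast [u, hε_add, map_mul, Units.inv_mk]
    linear_combination (-(χ₂ g : O ⧸ Ideal.span {π ^ n}) * (χ₂ h : O ⧸ Ideal.span {π ^ n})) * hε_sq g h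
  · show (χ₁ g : O ⧸ Ideal.span {π ^ n}) * (1 + ε g) + (χ₂ g : O ⧸ Ideal.span {π ^ n}) * (1 - ε g) = _
    linear_combination hχε g
end
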